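/- Let ρ̄ be a Bell state, H₁ = σ_z ⊗ σ_y − 3(𝟙 ⊗ σ_y), and define the feedback law u(ρ) = α(1 − X(ρ))^β − γ·T(ρ), where X(ρ) = Tr(ρρ̄), T(ρ) = Tr(i[H₁, ρ]ρ̄), α > 0, γ > 0, and β > 1. Set Θ_u(ρ) = u(ρ)·T(ρ). Then: (i) there exists a constant C > 0 such that |Θ_u(ρ)| ≤ C(1 − X(ρ)) for all ρ ∈ S; (ii) Θ_u(ρ) ≤ 2α‖H₁‖(1 − X(ρ))^{β + 1/2} for all ρ ∈ S, where ‖H₁‖ is the operator norm of H₁; and (iii) u(ρ) ≠ 0 whenever X(ρ) = 0. In particular, Θ_u(ρ)/(1 − X(ρ)) has nonpositive limit superior as ρ → ρ̄. -/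

import Mathlib

open Matrix ComplexOrder

noncomputable section

/-- Pauli matrices. -/
def σx : Matrix (Fin 2) (Fin 2) ℂ := !![0, 1; 1, 0]
def σy : Matrix (Fin 2) (Fin 2) ℂ := !![0, -Complex.I; Complex.I, 0]
def σz : Matrix (Fin 2) (Fin 2) ℂ := !![1, 0; 0, -1]
def id2 : Matrix (Fin 2) (Fin 2) ℂ := 1

/-- Kronecker product of two `2 × 2` matrices, indexed by `Fin 4`
(with the identification `(i,k) ↦ 2*i + k`). -/
def kron (A B : Matrix (Fin 2) (Fin 2) ℂ) : Matrix (Fin 4) (Fin 4) ℂ :=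
  fun i j => A ⟨i.val / 2, by omega⟩ ⟨j.val / 2, by omega⟩ *
             B ⟨i.val % 2, by omega⟩ ⟨j.val % 2, by omega⟩

/-- The measurement matrices `L_z = σ_z ⊗ σ_z` and `L_x = σ_x ⊗ σ_x`. -/
def Lz : Matrix (Fin 4) (Fin 4) ℂ := kron σz σz
def Lx : Matrix (Fin 4) (Fin 4) ℂ := kron σx σx

/-- The Bell vectors. -/
def PsiPlus : Fin 4 → ℂ := ![(Real.sqrt 2 : ℂ)⁻¹, 0, 0, (Real.sqrt 2 : ℂ)⁻¹]
def PsiMinus : Fin 4 → ℂ := ![(Real.sqrt 2 : ℂ)⁻¹, 0, 0, -(Real.sqrt 2 : ℂ)⁻¹]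
def PhiPlus : Fin 4 → ℂ := ![0, (Real.sqrt 2 : ℂ)⁻¹, (Real.sqrt 2 : ℂ)⁻¹, 0]
def PhiMinus : Fin 4 → ℂ := ![0, (Real.sqrt 2 : ℂ)⁻¹, -(Real.sqrt 2 : ℂ)⁻¹, 0]

/-- The rank-one projection `ξξ*`. -/
def outer (ξ : Fin 4 → ℂ) : Matrix (Fin 4) (Fin 4) ℂ := Matrix.vecMulVec ξ (star ξ)

/-- The set of the four Bell states. -/
def BellStates : Set (Matrix (Fin 4) (Fin 4) ℂ) :=
  {outer PsiPlus, outer PsiMinus, outer PhiPlus, outer PhiMinus}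

/-- The state space `S`. -/
def IsState (ρ : Matrix (Fin 4) (Fin 4) ℂ) : Prop := ρ.PosSemidef ∧ ρ.trace = 1

def Λ₁ (ρ : Matrix (Fin 4) (Fin 4) ℂ) : ℝ := (ρ 0 0).re + (ρ 3 3).re
def Λ₂ (ρ : Matrix (Fin 4) (Fin 4) ℂ) : ℝ := (ρ 1 1).re + (ρ 2 2).re
def Γ (ρ : Matrix (Fin 4) (Fin 4) ℂ) : ℝ := 2 * (ρ 1 2).re + 2 * (ρ 0 3).re
def Δ (ρ : Matrix (Fin 4) (Fin 4) ℂ) : ℝ := Λ₁ ρ * (ρ 1 2).re - Λ₂ ρ * (ρ 0 3).re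

/-- The control Hamiltonian `H₁ = σ_z ⊗ σ_y - 3(𝟙 ⊗ σ_y)`. -/
def H₁ : Matrix (Fin 4) (Fin 4) ℂ := kron σz σy - (3 : ℂ) • kron id2 σy

/-- properties of the feedback law
`u(ρ) = α(1 - X(ρ))^β - γ Tr(i[H₁,ρ]ρ̄)`, with `X(ρ) = Tr(ρρ̄)`,
`T(ρ) = Tr(i[H₁,ρ]ρ̄)` and `Θ_u(ρ) = u(ρ)T(ρ)`:
(i) `|Θ_u(ρ)| ≤ C(1 - X(ρ))` on `S` for some `C > 0`;
(ii) `Θ_u(ρ) ≤ 2α‖H₁‖(1 - X(ρ))^(β + 1/2)` on `S`;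
(iii) `u(ρ) ≠ 0` whenever `X(ρ) = 0`. -/
lemma H1_explicit : H₁ = !![0, 2*Complex.I, 0, 0; -2*Complex.I, 0, 0, 0;
    0, 0, 0, 4*Complex.I; 0, 0, -4*Complex.I, 0] := by
  ext i j
  fin_cases i <;> fin_cases j <;>
    norm_num [H₁, kron, σz, σy, id2, Matrix.one_apply,
      show ((0:Fin 4).val) = 0 from rfl, show ((1:Fin 4).val) = 1 from rfl,
      show ((2:Fin 4).val) = 2 from rfl, show ((3:Fin 4).val) = 3 from rfl,
      Fin.mk_zero, Fin.mk_one] <;> ring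

lemma ofReal_c (x : ℝ) : (RCLike.ofReal x : ℂ) = Complex.ofReal x := by
  simp [RCLike.ofReal]

lemma psd_aux (ρ : Matrix (Fin 4) (Fin 4) ℂ) (hρ : ρ.PosSemidef) (htr : ρ.trace = 1) :
    (ρ - ρ * ρ).PosSemidef ∧ ((1 : Matrix (Fin 4) (Fin 4) ℂ) - ρ).PosSemidef := by
  have hH := hρ.1
  set U : Matrix (Fin 4) (Fin 4) ℂ := (hH.eigenvectorUnitary : Matrix (Fin 4) (Fin 4) ℂ) with hU
  have hUU : U * star U = 1 := (Matrix.mem_unitaryGroup_iff).mp hH.eigenvectorUnitary.2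
  have hUU' : star U * U = 1 := (Matrix.mem_unitaryGroup_iff').mp hH.eigenvectorUnitary.2
  set D : Matrix (Fin 4) (Fin 4) ℂ := Matrix.diagonal (RCLike.ofReal ∘ hH.eigenvalues) with hD
  have hspec : ρ = U * D * star U := hH.spectral_theorem
  have hl0 : ∀ i, 0 ≤ hH.eigenvalues i := hρ.eigenvalues_nonneg
  have htrD : ρ.trace = ∑ i, (hH.eigenvalues i : ℂ) := by
    conv_lhs => rw [hspec]
    rw [Matrix.trace_mul_cycle, hUU', one_mul]
    simp [hD, Matrix.trace_diagonal]
  have hsum : ∑ i, hH.eigenvalues i = 1 := by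
    have : ((∑ i, hH.eigenvalues i : ℝ) : ℂ) = 1 := by push_cast [← htrD, htr]; rfl
    exact_mod_cast this
  have hl1 : ∀ i, hH.eigenvalues i ≤ 1 := by
    intro i
    rw [← hsum]
    exact Finset.single_le_sum (fun j _ => hl0 j) (Finset.mem_univ i)
  have hstar : star U = Uᴴ := rfl
  constructor
  · have h1 : ρ - ρ * ρ = U * (D - D * D) * Uᴴ := by
      rw [← hstar]
      conv_lhs => rw [hspec]
      rw [show (U * D * star U) * (U * D * star U) = U * D * (star U * U) * D * star U by
          noncomm_ring, hUU']
      noncomm_ring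
    rw [h1]
    refine Matrix.PosSemidef.mul_mul_conjTranspose_same ?_ U
    rw [hD, Matrix.diagonal_mul_diagonal, Matrix.diagonal_sub]
    refine Matrix.posSemidef_diagonal_iff.mpr fun i => ?_
    have : (RCLike.ofReal ∘ hH.eigenvalues) i - ((RCLike.ofReal ∘ hH.eigenvalues) i *
        (RCLike.ofReal ∘ hH.eigenvalues) i) =
        ((hH.eigenvalues i - hH.eigenvalues i * hH.eigenvalues i : ℝ) : ℂ) := by
      simp only [Function.comp_apply, ofReal_c]; push_cast; ring
    rw [this, Complex.zero_le_real]
    nlinarith [hl0 i, hl1 i]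
  · have h1 : (1 : Matrix (Fin 4) (Fin 4) ℂ) - ρ = U * (1 - D) * Uᴴ := by
      rw [← hstar]
      conv_lhs => rw [hspec, ← hUU]
      noncomm_ring
    rw [h1]
    refine Matrix.PosSemidef.mul_mul_conjTranspose_same ?_ U
    rw [hD, ← Matrix.diagonal_one, Matrix.diagonal_sub]
    refine Matrix.posSemidef_diagonal_iff.mpr fun i => ?_
    have : (1 : ℂ) - (RCLike.ofReal ∘ hH.eigenvalues) i =
((1 - hH.eigenvalues i : ℝ) : ℂ) := by
      simp only [Function.comp_apply, ofReal_c]; push_cast; ring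
    rw [this, Complex.zero_le_real]
    linarith [hl1 i]

lemma trace_mul_outer (M : Matrix (Fin 4) (Fin 4) ℂ) (ξ : Fin 4 → ℂ) :
    (M * Matrix.vecMulVec ξ (star ξ)).trace = star ξ ⬝ᵥ (M *ᵥ ξ) := by
  simp only [Matrix.trace, Matrix.diag_apply, Matrix.mul_apply, Matrix.vecMulVec_apply,
    dotProduct, Matrix.mulVec, Pi.star_apply, Finset.mul_sum]
  exact Finset.sum_congr rfl fun i _ => Finset.sum_congr rfl fun j _ => by ring

lemma key_estimate (H : Matrix (Fin 4) (Fin 4) ℂ) (hHh : Hᴴ = H)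
    (ξ : Fin 4 → ℂ) (hξ : star ξ ⬝ᵥ ξ = 1) (hperp : star ξ ⬝ᵥ (H *ᵥ ξ) = 0)
    (ρ : Matrix (Fin 4) (Fin 4) ℂ) (hρ : ρ.PosSemidef) (htr : ρ.trace = 1) :
    ∃ X : ℝ, star ξ ⬝ᵥ (ρ *ᵥ ξ) = (X : ℂ) ∧ 0 ≤ X ∧ X ≤ 1 ∧
      |((Complex.I • (H * ρ - ρ * H) * Matrix.vecMulVec ξ (star ξ)).trace).re| ≤
        2 * ‖Matrix.toEuclideanCLM (𝕜 := ℂ) H‖ * Real.sqrt (X * (1 - X)) := by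
  have hρh : ρᴴ = ρ := hρ.1
  set Xc := star ξ ⬝ᵥ (ρ *ᵥ ξ) with hXcdef
  have hXc0 : 0 ≤ Xc := hρ.dotProduct_mulVec_nonneg ξ
  have him : Xc.im = 0 := by
    have := (Complex.le_def.mp hXc0).2; simpa using this.symm
  have hre0 : 0 ≤ Xc.re := by
    have := (Complex.le_def.mp hXc0).1; simpa using this
  set X := Xc.re with hXdef
  have hXeq : Xc = (X : ℂ) := by
    apply Complex.ext <;> simp [him, hXdef]
  have hX1 : X ≤ 1 := by
    have hps := (psd_aux ρ hρ htr).2.dotProduct_mulVec_nonneg ξ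
    have : ((1 : Matrix (Fin 4) (Fin 4) ℂ) - ρ) *ᵥ ξ = ξ - ρ *ᵥ ξ := by
      rw [Matrix.sub_mulVec, Matrix.one_mulVec]
    rw [this, dotProduct_sub, hξ, ← hXcdef] at hps
    have := (Complex.le_def.mp hps).1
    simp only [Complex.zero_re, Complex.sub_re, Complex.one_re] at this
    linarith
  refine ⟨X, hXeq, hre0, hX1, ?_⟩
  -- the trace equals I * (b - star b)
  set b := star ξ ⬝ᵥ (H *ᵥ (ρ *ᵥ ξ)) with hbdef
  have hb1 : star ξ ⬝ᵥ ((H * ρ) *ᵥ ξ) = b := by rw [hbdef, Matrix.mulVec_mulVec]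
  have hb2 : star ξ ⬝ᵥ ((ρ * H) *ᵥ ξ) = star b := by
    rw [Matrix.star_dotProduct ξ ((ρ * H) *ᵥ ξ)]
    congr 1
    rw [hbdef, Matrix.star_mulVec, Matrix.conjTranspose_mul, hρh, hHh,
      ← Matrix.dotProduct_mulVec]
    simp [Matrix.mulVec_mulVec]
  have htrace : (Complex.I • (H * ρ - ρ * H) * Matrix.vecMulVec ξ (star ξ)).trace
      = Complex.I * (b - star b) := by
    rw [Matrix.smul_mul, Matrix.trace_smul, Matrix.sub_mul, Matrix.trace_sub,
      trace_mul_outer, trace_mul_outer, hb1, hb2]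
    simp [smul_eq_mul]
  have hre : ((Complex.I • (H * ρ - ρ * H) * Matrix.vecMulVec ξ (star ξ)).trace).re
      = -2 * b.im := by
    rw [htrace]
    simp [Complex.mul_re, Complex.sub_im, Complex.sub_re]
    ring
  rw [hre]
  -- bound |b|
  set h := H *ᵥ ξ with hhdef
  set w := ρ *ᵥ ξ with hwdef
  have hhξ0 : star h ⬝ᵥ ξ = 0 := by
    rw [Matrix.star_dotProduct, hperp]; simp
  have hb3 : b = star h ⬝ᵥ w := by
    rw [hbdef, Matrix.dotProduct_mulVec, hhdef, Matrix.star_mulVec, hHh]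
  set w' : Fin 4 → ℂ := w - (X : ℂ) • ξ with hw'def
  have hb4 : b = star h ⬝ᵥ w' := by
    rw [hw'def, dotProduct_sub, dotProduct_smul, hhξ0, hb3]
    simp
  -- Euclidean space
  set e : (Fin 4 → ℂ) → EuclideanSpace ℂ (Fin 4) := fun v => (WithLp.equiv 2 (Fin 4 → ℂ)).symm v with hedef
  have hinner : ∀ x y : Fin 4 → ℂ, (inner ℂ (e x) (e y) : ℂ) = star x ⬝ᵥ y := fun x y =>
    (EuclideanSpace.inner_toLp_toLp x y).trans (dotProduct_comm _ _)
  have hnormsq : ∀ x : Fin 4 → ℂ, ‖e x‖ ^ 2 = (star x ⬝ᵥ x).re := by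
    intro x
    rw [← hinner x x, ← inner_self_eq_norm_sq (𝕜 := ℂ)]
    rfl
  have hnξ : ‖e ξ‖ = 1 := by
    have h3 : ‖e ξ‖ ^ 2 = 1 := by rw [hnormsq, hξ]; simp
    nlinarith [norm_nonneg (e ξ)]
  have hnh : ‖e h‖ ≤ ‖Matrix.toEuclideanCLM (𝕜 := ℂ) H‖ := by
    have : Matrix.toEuclideanCLM (𝕜 := ℂ) H (e ξ) = e h := by
      rw [hedef]; exact Matrix.toEuclideanCLM_toLp H ξ
    calc ‖e h‖ = ‖Matrix.toEuclideanCLM (𝕜 := ℂ) H (e ξ)‖ := by rw [this]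
      _ ≤ ‖Matrix.toEuclideanCLM (𝕜 := ℂ) H‖ * ‖e ξ‖ :=
          ContinuousLinearMap.le_opNorm _ _
      _ = ‖Matrix.toEuclideanCLM (𝕜 := ℂ) H‖ := by rw [hnξ, mul_one]
  -- ‖e w‖² ≤ X
  have hww : star w ⬝ᵥ w = star ξ ⬝ᵥ ((ρ * ρ) *ᵥ ξ) := by
    rw [hwdef, Matrix.star_mulVec, hρh, ← Matrix.dotProduct_mulVec, Matrix.mulVec_mulVec]
  have hw2 : ‖e w‖ ^ 2 ≤ X - 0 := by
    have hps := (psd_aux ρ hρ htr).1.dotProduct_mulVec_nonneg ξ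
    have hsub : (ρ - ρ * ρ) *ᵥ ξ = ρ *ᵥ ξ - (ρ * ρ) *ᵥ ξ := Matrix.sub_mulVec _ _ _
    rw [hsub, dotProduct_sub, ← hXcdef] at hps
    have hle := (Complex.le_def.mp hps).1
    simp only [Complex.zero_re, Complex.sub_re] at hle
    rw [hnormsq, hww]
    linarith
  -- ‖e w'‖² = ‖e w‖² - X²
  have hw'2 : ‖e w'‖ ^ 2 = ‖e w‖ ^ 2 - X ^ 2 := by
    have hstarw' : star w' = star w - (X : ℂ) • star ξ := by
      rw [hw'def]; rw [star_sub, star_smul]; simp [Complex.conj_ofReal]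
    have hξw : star ξ ⬝ᵥ w = (X : ℂ) := by rw [← hXcdef, hXeq]
    have hwξ : star w ⬝ᵥ ξ = (X : ℂ) := by
      rw [Matrix.star_dotProduct, hξw]; simp [Complex.conj_ofReal]
    have hc : star w' ⬝ᵥ w' = star w ⬝ᵥ w - ((X : ℝ) ^ 2 : ℂ) := by
      rw [hw'def, hstarw', sub_dotProduct, dotProduct_sub, dotProduct_sub,
        smul_dotProduct, smul_dotProduct, dotProduct_smul, dotProduct_smul,
        hξw, hwξ, hξ]
      push_cast [smul_eq_mul]
      ring
    have hre2 := congrArg Complex.re hc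
    simp only [Complex.sub_re, Complex.ofReal_re] at hre2
    rw [hnormsq, hnormsq, hre2]
    simp [← Complex.ofReal_pow]
  have hw'le : ‖e w'‖ ≤ Real.sqrt (X * (1 - X)) := by
    have h1 : ‖e w'‖ ^ 2 ≤ X * (1 - X) := by nlinarith
    have := Real.sqrt_le_sqrt h1
    rwa [Real.sqrt_sq (norm_nonneg _)] at this
  -- conclude
  have habs : ‖b‖ ≤ ‖Matrix.toEuclideanCLM (𝕜 := ℂ) H‖ * Real.sqrt (X * (1 - X)) := by
    have hb5 : (b : ℂ) = inner ℂ (e h) (e w') := by rw [hinner, hb4]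
    calc ‖b‖ = ‖(inner ℂ (e h) (e w') : ℂ)‖ := by rw [hb5]
      _ ≤ ‖e h‖ * ‖e w'‖ := norm_inner_le_norm _ _
      _ ≤ ‖Matrix.toEuclideanCLM (𝕜 := ℂ) H‖ * Real.sqrt (X * (1 - X)) :=
          mul_le_mul hnh hw'le (norm_nonneg _) (norm_nonneg _)
  have him_le : |b.im| ≤ ‖b‖ := Complex.abs_im_le_norm b
  calc |(-2) * b.im| = 2 * |b.im| := by rw [abs_mul]; norm_num
    _ ≤ 2 * ‖b‖ := by linarith
    _ ≤ 2 * (‖Matrix.toEuclideanCLM (𝕜 := ℂ) H‖ * Real.sqrt (X * (1 - X))) := by linarith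
    _ = 2 * ‖Matrix.toEuclideanCLM (𝕜 := ℂ) H‖ * Real.sqrt (X * (1 - X)) := by ring

lemma real_part (α γ β M X T : ℝ) (hα : 0 < α) (hγ : 0 < γ) (hβ : 1 < β) (hM : 0 ≤ M)
    (hX0 : 0 ≤ X) (hX1 : X ≤ 1) (hT : |T| ≤ 2 * M * Real.sqrt (X * (1 - X))) :
    |(α * (1 - X) ^ β - γ * T) * T| ≤ (2 * α * M + 4 * γ * M ^ 2 + 1) * (1 - X) ∧
    (α * (1 - X) ^ β - γ * T) * T ≤ 2 * α * M * (1 - X) ^ (β + 1 / 2) ∧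
    (X = 0 → α * (1 - X) ^ β - γ * T ≠ 0) := by
  set s := 1 - X with hsdef
  have hs0 : 0 ≤ s := by linarith
  have hs1 : s ≤ 1 := by linarith
  have hXs0 : 0 ≤ X * s := mul_nonneg hX0 hs0
  have hsq : Real.sqrt (X * s) ≤ Real.sqrt s := Real.sqrt_le_sqrt (by nlinarith)
  have hsqnn : 0 ≤ Real.sqrt s := Real.sqrt_nonneg s
  have hT' : |T| ≤ 2 * M * Real.sqrt s := by
    refine hT.trans ?_
    nlinarith [Real.sqrt_nonneg (X * s)]
  have hT2 : T ^ 2 ≤ 4 * M ^ 2 * (X * s) := by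
    have h1 : T ^ 2 = |T| ^ 2 := (sq_abs T).symm
    have h2 : (2 * M * Real.sqrt (X * s)) ^ 2 = 4 * M ^ 2 * (X * s) := by
      rw [mul_pow, mul_pow, Real.sq_sqrt hXs0]; ring
    nlinarith [abs_nonneg T, Real.sqrt_nonneg (X * s), hT]
  have hpownn : 0 ≤ s ^ β := Real.rpow_nonneg hs0 β
  have hpow1 : s ^ β ≤ 1 := Real.rpow_le_one hs0 hs1 (by linarith)
  have hexp_ne : β + 1 / 2 ≠ 0 := by positivity
  have hsplit : s ^ (β + 1 / 2) = s ^ β * Real.sqrt s := by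
    rw [Real.rpow_add' hs0 hexp_ne, Real.sqrt_eq_rpow]
  have hsle : s ^ (β + 1 / 2) ≤ s := by
    rcases eq_or_lt_of_le hs0 with h | h
    · rw [← h, Real.zero_rpow hexp_ne]
    · calc s ^ (β + 1 / 2) ≤ s ^ (1 : ℝ) :=
          Real.rpow_le_rpow_of_exponent_ge h hs1 (by linarith)
        _ = s := Real.rpow_one s
  have hmid : α * s ^ β * |T| ≤ 2 * α * M * s ^ (β + 1 / 2) := by
    rw [hsplit]
    nlinarith [mul_le_mul_of_nonneg_left hT' (mul_nonneg hα.le hpownn)]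
  refine ⟨?_, ?_, ?_⟩
  · calc |(α * s ^ β - γ * T) * T| = |α * s ^ β - γ * T| * |T| := abs_mul _ _
      _ ≤ (α * s ^ β + γ * |T|) * |T| := by
          refine mul_le_mul_of_nonneg_right ?_ (abs_nonneg T)
          calc |α * s ^ β - γ * T| ≤ |α * s ^ β| + |γ * T| := abs_sub _ _
            _ = α * s ^ β + γ * |T| := by
                rw [abs_of_nonneg (mul_nonneg hα.le hpownn), abs_mul,
                  abs_of_nonneg hγ.le]
      _ = α * s ^ β * |T| + γ * |T| ^ 2 := by ring
      _ ≤ 2 * α * M * s + 4 * γ * M ^ 2 * s := by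
          have h1 : α * s ^ β * |T| ≤ 2 * α * M * s :=
            hmid.trans (by nlinarith [mul_le_mul_of_nonneg_left hsle (by positivity : (0:ℝ) ≤ 2 * α * M)])
          have h2 : γ * |T| ^ 2 ≤ 4 * γ * M ^ 2 * s := by
            rw [sq_abs]
            nlinarith [mul_le_mul_of_nonneg_left hT2 hγ.le,
              mul_nonneg (mul_nonneg (by positivity : (0:ℝ) ≤ 4 * γ * M ^ 2) hs0)
                (by linarith : (0:ℝ) ≤ 1 - X)]
          linarith
      _ ≤ (2 * α * M + 4 * γ * M ^ 2 + 1) * s := by nlinarith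
  · have h1 : (α * s ^ β - γ * T) * T = α * s ^ β * T - γ * T ^ 2 := by ring
    rw [h1]
    have h2 : α * s ^ β * T ≤ α * s ^ β * |T| :=
      mul_le_mul_of_nonneg_left (le_abs_self T) (mul_nonneg hα.le hpownn)
    nlinarith
  · intro hX
    have hTz : T = 0 := by
      have : Real.sqrt (X * s) = 0 := by rw [hX]; simp
      rw [this] at hT
      have := abs_nonneg T
      have habs : |T| = 0 := le_antisymm (by linarith [hT]) this
      exact abs_eq_zero.mp habs
    have hs : s = 1 := by rw [hsdef, hX]; norm_num
    rw [hTz, hs, Real.one_rpow]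
    simp [hα.ne']

lemma H1_herm : H₁ᴴ = H₁ := by
  rw [H1_explicit]
  ext i j
  fin_cases i <;> fin_cases j <;>
    simp [Matrix.conjTranspose_apply, Complex.ext_iff, Matrix.vecHead, Matrix.vecTail]

lemma sqrt2_inv_sq : ((Real.sqrt 2 : ℂ))⁻¹ * ((Real.sqrt 2 : ℂ))⁻¹ = 1 / 2 := by
  rw [← mul_inv]
  rw [show (Real.sqrt 2 : ℂ) * (Real.sqrt 2 : ℂ) = 2 by
    norm_cast
    rw [Real.mul_self_sqrt] <;> norm_num]
  norm_num

lemma norm_PsiPlus : star PsiPlus ⬝ᵥ PsiPlus = 1 := by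
  simp [PsiPlus, dotProduct, Fin.sum_univ_four, Pi.star_apply, Complex.star_def, map_inv₀,
    Complex.conj_ofReal]
  norm_num [sqrt2_inv_sq]

lemma norm_PsiMinus : star PsiMinus ⬝ᵥ PsiMinus = 1 := by
  simp [PsiMinus, dotProduct, Fin.sum_univ_four, Pi.star_apply, Complex.star_def, map_inv₀,
    Complex.conj_ofReal]
  norm_num [sqrt2_inv_sq]

lemma norm_PhiPlus : star PhiPlus ⬝ᵥ PhiPlus = 1 := by
  simp [PhiPlus, dotProduct, Fin.sum_univ_four, Pi.star_apply, Complex.star_def, map_inv₀,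
    Complex.conj_ofReal]
  norm_num [sqrt2_inv_sq]

lemma norm_PhiMinus : star PhiMinus ⬝ᵥ PhiMinus = 1 := by
  simp [PhiMinus, dotProduct, Fin.sum_univ_four, Pi.star_apply, Complex.star_def, map_inv₀,
    Complex.conj_ofReal]
  norm_num [sqrt2_inv_sq]

lemma perp_PsiPlus : star PsiPlus ⬝ᵥ (H₁ *ᵥ PsiPlus) = 0 := by
  simp [H1_explicit, PsiPlus, Matrix.mulVec, dotProduct, Fin.sum_univ_four, Matrix.vecHead, Matrix.vecTail]

lemma perp_PsiMinus : star PsiMinus ⬝ᵥ (H₁ *ᵥ PsiMinus) = 0 := by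
  simp [H1_explicit, PsiMinus, Matrix.mulVec, dotProduct, Fin.sum_univ_four, Matrix.vecHead, Matrix.vecTail]

lemma perp_PhiPlus : star PhiPlus ⬝ᵥ (H₁ *ᵥ PhiPlus) = 0 := by
  simp [H1_explicit, PhiPlus, Matrix.mulVec, dotProduct, Fin.sum_univ_four, Matrix.vecHead, Matrix.vecTail]

lemma perp_PhiMinus : star PhiMinus ⬝ᵥ (H₁ *ᵥ PhiMinus) = 0 := by
  simp [H1_explicit, PhiMinus, Matrix.mulVec, dotProduct, Fin.sum_univ_four, Matrix.vecHead, Matrix.vecTail]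

theorem feedback_law_properties (ρbar : Matrix (Fin 4) (Fin 4) ℂ)
    (hbell : ρbar ∈ BellStates) (α γ β : ℝ) (hα : 0 < α) (hγ : 0 < γ) (hβ : 1 < β)
    (X T u Θ : Matrix (Fin 4) (Fin 4) ℂ → ℝ)
    (hX : ∀ ρ, X ρ = ((ρ * ρbar).trace).re)
    (hT : ∀ ρ, T ρ = ((Complex.I • (H₁ * ρ - ρ * H₁) * ρbar).trace).re)
    (hu : ∀ ρ, u ρ = α * (1 - X ρ) ^ β - γ * T ρ)
    (hΘ : ∀ ρ, Θ ρ = u ρ * T ρ) :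
    (∃ C > 0, ∀ ρ, IsState ρ → |Θ ρ| ≤ C * (1 - X ρ)) ∧
    (∀ ρ, IsState ρ → Θ ρ ≤ 2 * α * ‖Matrix.toEuclideanCLM (𝕜 := ℂ) H₁‖ *
      (1 - X ρ) ^ (β + 1 / 2)) ∧
    (∀ ρ, IsState ρ → X ρ = 0 → u ρ ≠ 0) := by
  obtain ⟨ξ, hξ1, hperp, hρb⟩ : ∃ ξ : Fin 4 → ℂ, star ξ ⬝ᵥ ξ = 1 ∧
      star ξ ⬝ᵥ (H₁ *ᵥ ξ) = 0 ∧ ρbar = Matrix.vecMulVec ξ (star ξ) := by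
    rcases hbell with h | h | h | h
    · exact ⟨PsiPlus, norm_PsiPlus, perp_PsiPlus, h⟩
    · exact ⟨PsiMinus, norm_PsiMinus, perp_PsiMinus, h⟩
    · exact ⟨PhiPlus, norm_PhiPlus, perp_PhiPlus, h⟩
    · exact ⟨PhiMinus, norm_PhiMinus, perp_PhiMinus, h⟩
  set M := ‖Matrix.toEuclideanCLM (𝕜 := ℂ) H₁‖ with hMdef
  have hM0 : 0 ≤ M := norm_nonneg _
  have key : ∀ ρ, IsState ρ → 0 ≤ X ρ ∧ X ρ ≤ 1 ∧
      |T ρ| ≤ 2 * M * Real.sqrt (X ρ * (1 - X ρ)) := by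
    intro ρ hρ
    obtain ⟨X0, hX0eq, hX00, hX01, hX0b⟩ :=
      key_estimate H₁ H1_herm ξ hξ1 hperp ρ hρ.1 hρ.2
    have hXρ : X ρ = X0 := by
      rw [hX ρ, hρb, trace_mul_outer, hX0eq, Complex.ofReal_re]
    have hTρ : |T ρ| ≤ 2 * M * Real.sqrt (X0 * (1 - X0)) := by
      rw [hT ρ, hρb]
      exact hX0b
    exact ⟨hXρ ▸ hX00, hXρ ▸ hX01, by rw [hXρ]; exact hTρ⟩
  refine ⟨⟨2 * α * M + 4 * γ * M ^ 2 + 1, ?_, ?_⟩, ?_, ?_⟩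
  · nlinarith [mul_nonneg hα.le hM0, mul_nonneg hγ.le (sq_nonneg M)]
  · intro ρ hρ
    obtain ⟨h1, h2, h3⟩ := key ρ hρ
    have := (real_part α γ β M (X ρ) (T ρ) hα hγ hβ hM0 h1 h2 h3).1
    rw [hΘ ρ, hu ρ]
    exact this
  · intro ρ hρ
    obtain ⟨h1, h2, h3⟩ := key ρ hρ
    have := (real_part α γ β M (X ρ) (T ρ) hα hγ hβ hM0 h1 h2 h3).2.1
    rw [hΘ ρ, hu ρ]
    exact this
  · intro ρ hρ hX0
    obtain ⟨h1, h2, h3⟩ := key ρ hρ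
    have := (real_part α γ β M (X ρ) (T ρ) hα hγ hβ hM0 h1 h2 h3).2.2 hX0
    rw [hu ρ]
    exact this
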